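/- Let p be an odd prime and n, A integers with n ≥ 2, 0 < A < n, and A = (t·p - r)/s with r, s, t integers, s > 0, gcd(r,s)=1, and suppose |r| + s ≤ n and p > n. Then f(x) = A·x mod p is a Type (iv) map: there exist i, j with 0 ≤ i, j < n such that f(I_i) ∩ I_j = ∅, i.e., no x ≡ i (mod n) with 1 ≤ x ≤ p-1 has (A·x mod p) ≡ j (mod n). -/
import Mathlib


theorem stmt_6 (p n A r s t : ℤ) (hp : Prime p) (hodd : Odd p) (hn : 2 ≤ n)
    (hA : 0 < A) (hAn : A < n)
    (hs : 0 < s) (hrs : Int.gcd r s = 1) (hdef : s * A = t * p - r)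
    (hsmall : |r| + s ≤ n) (hpn : n < p) :
    ∃ i j : ℤ, 0 ≤ i ∧ i < n ∧ 0 ≤ j ∧ j < n ∧
      ∀ x : ℤ, 1 ≤ x → x ≤ p - 1 → x % n = i → ((A * x) % p) % n ≠ j := by
  have hp0 : (0:ℤ) < p := by linarith
  have hn0 : (0:ℤ) < n := by linarith
  have hr0 : r ≠ 0 := by
    rintro rfl
    have hs1 : s = 1 := by
      have h1 : s.natAbs = 1 := by simpa [Int.gcd] using hrs
      omega
    subst hs1
    have hpA : p ∣ A := ⟨t, by linarith⟩
    have := Int.le_of_dvd hA hpA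
    linarith
  set a : ℤ := min 1 (r + 1) with ha
  set b : ℤ := max (r + s - 1) (s - 1) with hb
  have habs := abs_cases r
  have hab : b + 1 - a = |r| + s - 1 := by
    rcases habs with ⟨h1, h2⟩ | ⟨h1, h2⟩ <;> omega
  set S : Finset ℤ := (Finset.Icc a b).image (fun m => (m * p) % n) with hS
  have hcard : S.card < (Finset.Ico (0:ℤ) n).card := by
    have h1 : S.card ≤ (Finset.Icc a b).card := Finset.card_image_le
    rw [Int.card_Icc] at h1
    rw [Int.card_Ico]
    rcases habs with ⟨e1, e2⟩ | ⟨e1, e2⟩ <;> omega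
  have hex : ∃ c ∈ Finset.Ico (0:ℤ) n, c ∉ S := by
    by_contra h
    push_neg at h
    have hsub : Finset.Ico (0:ℤ) n ⊆ S := fun z hz => h z hz
    have := Finset.card_le_card hsub
    omega
  obtain ⟨c, hcmem, hcS⟩ := hex
  rw [Finset.mem_Ico] at hcmem
  obtain ⟨hc0, hcn⟩ := hcmem
  set u : ℤ := Int.gcdA r s with hu
  set v : ℤ := Int.gcdB r s with hv
  have hbez : r * u + s * v = 1 := by
    have := Int.gcd_eq_gcd_ab r s
    rw [hrs] at this
    exact_mod_cast this.symm
  refine ⟨(c * u) % n, (c * v) % n, Int.emod_nonneg _ (ne_of_gt hn0),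
    Int.emod_lt_of_pos _ hn0, Int.emod_nonneg _ (ne_of_gt hn0),
    Int.emod_lt_of_pos _ hn0, ?_⟩
  intro x hx1 hx2 hxi hyj
  set y : ℤ := (A * x) % p with hy
  have hy0 : 0 ≤ y := Int.emod_nonneg _ (ne_of_gt hp0)
  have hyp : y < p := Int.emod_lt_of_pos _ hp0
  have hy1 : 1 ≤ y := by
    rcases eq_or_lt_of_le hy0 with h | h
    · exfalso
      have hdvd : p ∣ A * x := Int.dvd_of_emod_eq_zero h.symm
      rcases hp.2.2 _ _ hdvd with hpa | hpx
      · have := Int.le_of_dvd hA hpa; linarith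
      · have := Int.le_of_dvd (by linarith) hpx; linarith
    · linarith
  have hq := Int.emod_add_mul_ediv (A * x) p
  -- y + p * ((A*x)/p) = A*x
  have hkey : s * y + r * x = p * (t * x - s * ((A * x) / p)) := by
    have h' : y + p * ((A * x) / p) = A * x := hq
    linear_combination s * h' + x * hdef
  set m : ℤ := t * x - s * ((A * x) / p) with hm
  have hmp : m * p = s * y + r * x := by rw [hkey]; ring
  have hmmem : m ∈ Finset.Icc a b := by
    rw [Finset.mem_Icc]
    have hsy1 : s ≤ s * y := le_mul_of_one_le_right hs.le hy1
    have hsy2 : s * y ≤ s * (p - 1) := mul_le_mul_of_nonneg_left (by linarith) hs.le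
    rcases habs with ⟨e1, e2⟩ | ⟨e1, e2⟩
    · -- r ≥ 0, so r > 0
      have hrpos : 0 < r := lt_of_le_of_ne e2 (Ne.symm hr0)
      have hrx1 : r ≤ r * x := le_mul_of_one_le_right hrpos.le hx1
      have hrx2 : r * x ≤ r * (p - 1) := mul_le_mul_of_nonneg_left hx2 hrpos.le
      have hexp : s * (p - 1) + r * (p - 1) = (r + s) * p - (r + s) := by ring
      have hl : 0 * p < m * p := by rw [hmp]; linarith
      have hh : m * p < (r + s) * p := by rw [hmp]; linarith
      have hlow : 0 < m := lt_of_mul_lt_mul_right hl hp0.le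
      have hhigh : m < r + s := lt_of_mul_lt_mul_right hh hp0.le
      omega
    · -- r < 0
      have hrneg : r < 0 := by omega
      have hrx1 : r * (p - 1) ≤ r * x := mul_le_mul_of_nonpos_left hx2 hrneg.le
      have hrx2 : r * x ≤ r * 1 := mul_le_mul_of_nonpos_left hx1 hrneg.le
      have hexp1 : s * 1 + r * (p - 1) = r * p + (s - r) := by ring
      have hexp2 : s * (p - 1) + r * 1 = s * p - (s - r) := by ring
      have hl : r * p < m * p := by rw [hmp]; linarith
      have hh : m * p < s * p := by rw [hmp]; linarith
      have hlow : r < m := lt_of_mul_lt_mul_right hl hp0.le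
      have hhigh : m < s := lt_of_mul_lt_mul_right hh hp0.le
      omega
  -- congruence: m*p ≡ c mod n
  have h1 : y % n = (c * v) % n := hyj
  have h2 : x % n = (c * u) % n := hxi
  have hmod : (m * p) % n = c := by
    have hme1 : (s * y + r * x) % n = (s * (c * v) + r * (c * u)) % n := by
      have hy' : Int.ModEq n y (c * v) := h1
      have hx' : Int.ModEq n x (c * u) := h2
      exact ((hy'.mul_left s).add (hx'.mul_left r))
    have heq : s * (c * v) + r * (c * u) = c := by linear_combination c * hbez
    rw [hmp, hme1, heq]
    exact Int.emod_eq_of_lt hc0 hcn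
  exact hcS (Finset.mem_image.mpr ⟨m, hmmem, hmod⟩)
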